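/- For λ' > λ > 0, equality holds in the transportation inequality for Poisson measures: h_λ(W₁(P(λ'), P(λ))) = H(P(λ') | P(λ)), where h_λ(r) = λ((1 + r/λ)log(1 + r/λ) - r/λ). -/

import Mathlib

open MeasureTheory ProbabilityTheory Real
open scoped ENNReal NNReal

/-- The L¹-Wasserstein distance (for the Euclidean metric) between two measures on `ℕ`. -/
noncomputable def W1Nat (μ ν : Measure ℕ) : ℝ≥0∞ :=
  ⨅ (cpl : Measure (ℕ × ℕ)) (_ : IsProbabilityMeasure cpl)
    (_ : cpl.map Prod.fst = μ) (_ : cpl.map Prod.snd = ν),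
    ∫⁻ p, ENNReal.ofReal |(p.1 : ℝ) - (p.2 : ℝ)| ∂cpl

/-- `h_λ(r) = λ((1 + r/λ)log(1 + r/λ) - r/λ)`. -/
noncomputable def hDev (c r : ℝ) : ℝ := c * ((1 + r / c) * log (1 + r / c) - r / c)

lemma poissonMeasure_singleton (r : ℝ≥0) (n : ℕ) :
    poissonMeasure r {n} = ENNReal.ofReal (poissonPMFReal r n) := by
  rw [ProbabilityTheory.poissonMeasure_singleton]
  rfl

lemma hasSum_poisson_mean (r : ℝ≥0) :
    HasSum (fun n : ℕ => (n : ℝ) * poissonPMFReal r n) r := by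
  have h1 : HasSum (fun n : ℕ => ((n + 1 : ℕ) : ℝ) * poissonPMFReal r (n + 1)) r := by
    have h := (poissonPMFRealSum r).mul_left (r : ℝ)
    rw [mul_one] at h
    refine h.congr_fun fun n => ?_
    unfold poissonPMFReal
    have h0 : (n.factorial : ℝ) ≠ 0 := Nat.cast_ne_zero.2 n.factorial_ne_zero
    rw [Nat.factorial_succ]
    push_cast
    field_simp
    ring
  have h2 := (hasSum_nat_add_iff (f := fun n : ℕ => (n : ℝ) * poissonPMFReal r n)
    (g := (r : ℝ)) 1).mp (h1.congr_fun fun n => by push_cast; ring)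
  simpa using h2

lemma lintegral_poisson_id (r : ℝ≥0) :
    ∫⁻ n, (n : ℝ≥0∞) ∂(poissonMeasure r) = r := by
  rw [lintegral_countable']
  have h : ∀ n : ℕ, (n : ℝ≥0∞) * poissonMeasure r {n}
      = ENNReal.ofReal ((n : ℝ) * poissonPMFReal r n) := by
    intro n
    rw [_root_.poissonMeasure_singleton, ENNReal.ofReal_mul (by positivity)]
    congr 1
    simp
  simp_rw [h]
  rw [← ENNReal.ofReal_tsum_of_nonneg
      (fun n => mul_nonneg (Nat.cast_nonneg n) poissonPMFReal_nonneg)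
      (hasSum_poisson_mean r).summable,
    (hasSum_poisson_mean r).tsum_eq]
  simp

lemma pmf_conv_real (a b : ℝ≥0) (n : ℕ) :
    ∑ k ∈ Finset.range (n + 1), poissonPMFReal b (n - k) * poissonPMFReal a k
      = poissonPMFReal (a + b) n := by
  unfold poissonPMFReal
  push_cast
  rw [add_pow, mul_div_assoc, Finset.sum_div, Finset.mul_sum]
  refine Finset.sum_congr rfl fun k hk => ?_
  have hkn : k ≤ n := Nat.lt_succ_iff.mp (Finset.mem_range.mp hk)
  rw [show -((a : ℝ) + b) = -a + -b by ring, Real.exp_add, Nat.cast_choose ℝ hkn]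
  have h1 : ((n - k).factorial : ℝ) ≠ 0 := Nat.cast_ne_zero.2 (Nat.factorial_ne_zero _)
  have h2 : (k.factorial : ℝ) ≠ 0 := Nat.cast_ne_zero.2 (Nat.factorial_ne_zero _)
  have h3 : (n.factorial : ℝ) ≠ 0 := Nat.cast_ne_zero.2 (Nat.factorial_ne_zero _)
  field_simp

lemma poisson_conv (a b : ℝ≥0) :
    ((poissonMeasure a).prod (poissonMeasure b)).map (fun p : ℕ × ℕ => p.1 + p.2)
      = poissonMeasure (a + b) := by
  refine Measure.ext_of_singleton fun n => ?_
  rw [Measure.map_apply (measurable_of_countable _) (measurableSet_singleton n),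
    Measure.prod_apply ((measurable_of_countable _) (measurableSet_singleton n)),
    lintegral_countable']
  have hset : ∀ x : ℕ, (Prod.mk x ⁻¹' ((fun p : ℕ × ℕ => p.1 + p.2) ⁻¹' {n}))
      = if x ≤ n then {n - x} else (∅ : Set ℕ) := by
    intro x
    ext y
    simp only [Set.mem_preimage, Set.mem_singleton_iff]
    split_ifs with hx
    · simp only [Set.mem_singleton_iff]
      omega
    · simp only [Set.mem_empty_iff_false, iff_false]
      omega
  have hterm : ∀ x : ℕ, poissonMeasure b (Prod.mk x ⁻¹' ((fun p : ℕ × ℕ => p.1 + p.2) ⁻¹' {n}))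
        * poissonMeasure a {x}
      = if x ∈ Finset.range (n + 1) then
          ENNReal.ofReal (poissonPMFReal b (n - x) * poissonPMFReal a x) else 0 := by
    intro x
    rw [hset x]
    by_cases hx : x ≤ n
    · rw [if_pos hx, if_pos (Finset.mem_range.mpr (Nat.lt_succ_of_le hx)),
        _root_.poissonMeasure_singleton, _root_.poissonMeasure_singleton,
        ENNReal.ofReal_mul poissonPMFReal_nonneg]
    · rw [if_neg hx, if_neg (by simpa using hx)]
      simp
  simp_rw [hterm]
  rw [tsum_eq_sum (f := fun x : ℕ => if x ∈ Finset.range (n + 1) then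
      ENNReal.ofReal (poissonPMFReal b (n - x) * poissonPMFReal a x) else 0)
      (fun x hx => if_neg hx)]
  rw [Finset.sum_ite_of_true (fun x hx => hx)]
  rw [← ENNReal.ofReal_sum_of_nonneg
      (fun x _ => mul_nonneg poissonPMFReal_nonneg poissonPMFReal_nonneg),
    pmf_conv_real, _root_.poissonMeasure_singleton]

lemma W1_poisson (lam lam' : ℝ≥0) (hle : lam ≤ lam') :
    W1Nat (poissonMeasure lam') (poissonMeasure lam) = ((lam' - lam : ℝ≥0) : ℝ≥0∞) := by
  set d := lam' - lam with hdd
  have hd : d + lam = lam' := tsub_add_cancel_of_le hle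
  apply le_antisymm
  · set μ := ((poissonMeasure d).prod (poissonMeasure lam)).map
      (fun q : ℕ × ℕ => (q.1 + q.2, q.2)) with hμ
    have hmeas : Measurable (fun q : ℕ × ℕ => (q.1 + q.2, q.2)) := measurable_of_countable _
    have hprob : IsProbabilityMeasure μ := Measure.isProbabilityMeasure_map hmeas.aemeasurable
    have hfst : μ.map Prod.fst = poissonMeasure lam' := by
      rw [hμ, Measure.map_map measurable_fst hmeas]
      have h : (Prod.fst ∘ fun q : ℕ × ℕ => (q.1 + q.2, q.2)) = fun q : ℕ × ℕ => q.1 + q.2 := rfl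
      rw [h, poisson_conv, hd]
    have hsnd : μ.map Prod.snd = poissonMeasure lam := by
      rw [hμ, Measure.map_map measurable_snd hmeas]
      have h : (Prod.snd ∘ fun q : ℕ × ℕ => (q.1 + q.2, q.2)) = Prod.snd := rfl
      rw [h, Measure.map_snd_prod]
      simp
    have hcost : ∫⁻ p, ENNReal.ofReal |(p.1 : ℝ) - (p.2 : ℝ)| ∂μ = d := by
      rw [hμ, lintegral_map (measurable_of_countable _) hmeas]
      have h : ∀ q : ℕ × ℕ, ENNReal.ofReal |(((q.1 + q.2, q.2) : ℕ × ℕ).1 : ℝ)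
          - (((q.1 + q.2, q.2) : ℕ × ℕ).2 : ℝ)| = (q.1 : ℝ≥0∞) := by
        intro q
        push_cast
        rw [add_sub_cancel_right, abs_of_nonneg (Nat.cast_nonneg _)]
        simp
      simp_rw [h]
      rw [← lintegral_map (f := fun n : ℕ => (n : ℝ≥0∞)) (measurable_of_countable _)
        measurable_fst, Measure.map_fst_prod]
      simp [lintegral_poisson_id]
    calc W1Nat (poissonMeasure lam') (poissonMeasure lam)
        ≤ ∫⁻ p, ENNReal.ofReal |(p.1 : ℝ) - (p.2 : ℝ)| ∂μ :=
          iInf_le_of_le μ (iInf_le_of_le hprob (iInf_le_of_le hfst (iInf_le_of_le hsnd le_rfl)))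
      _ = d := hcost
  · refine le_iInf fun cpl => le_iInf fun hprob => le_iInf fun hfst => le_iInf fun hsnd => ?_
    have h1 : ∫⁻ p : ℕ × ℕ, (p.1 : ℝ≥0∞) ∂cpl = lam' := by
      rw [← lintegral_poisson_id lam', ← hfst,
        lintegral_map (measurable_of_countable _) measurable_fst]
    have h2 : ∫⁻ p : ℕ × ℕ, (p.2 : ℝ≥0∞) ∂cpl = lam := by
      rw [← lintegral_poisson_id lam, ← hsnd,
        lintegral_map (measurable_of_countable _) measurable_snd]
    have key : (lam' : ℝ≥0∞) ≤ (∫⁻ p, ENNReal.ofReal |(p.1 : ℝ) - (p.2 : ℝ)| ∂cpl) + lam := by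
      rw [← h1, ← h2, ← lintegral_add_left (measurable_of_countable _)]
      refine lintegral_mono fun p => ?_
      rcases le_total p.1 p.2 with h | h
      · calc (p.1 : ℝ≥0∞) ≤ (p.2 : ℝ≥0∞) := by exact_mod_cast h
          _ ≤ _ := le_add_self
      · have habs : |(p.1 : ℝ) - (p.2 : ℝ)| = ((p.1 - p.2 : ℕ) : ℝ) := by
          rw [Nat.cast_sub h, abs_of_nonneg (by simp [sub_nonneg, Nat.cast_le.mpr h])]
        rw [habs, ENNReal.ofReal_natCast, ← Nat.cast_add]
        exact Nat.cast_le.mpr (by omega)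
    rw [hdd, ENNReal.coe_sub]
    exact tsub_le_iff_right.mpr key

/-- For `λ' > λ > 0`, equality holds in the transportation inequality for Poisson measures:
`h_λ(W₁(P(λ'), P(λ))) = H(P(λ') | P(λ))`, where the relative entropy is given by its
explicit series. -/
theorem poisson_transport_equality (lam lam' : ℝ≥0) (h0 : 0 < lam) (hlt : lam < lam') :
    hDev (lam : ℝ) (W1Nat (poissonMeasure lam') (poissonMeasure lam)).toReal
      = ∑' n : ℕ, (exp (-(lam' : ℝ)) * (lam' : ℝ) ^ n / n.factorial) *
          log ((exp (-(lam' : ℝ)) * (lam' : ℝ) ^ n / n.factorial) /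
            (exp (-(lam : ℝ)) * (lam : ℝ) ^ n / n.factorial)) := by
  have hle : lam ≤ lam' := hlt.le
  have hlam0 : (0 : ℝ) < lam := h0
  have hlam'0 : (0 : ℝ) < lam' := lt_trans h0 hlt
  have hW : (W1Nat (poissonMeasure lam') (poissonMeasure lam)).toReal = (lam' : ℝ) - lam := by
    rw [W1_poisson lam lam' hle]
    rw [ENNReal.coe_toReal, NNReal.coe_sub hle]
  rw [hW]
  set c : ℝ := Real.log lam' - Real.log lam with hc
  have hterm : ∀ n : ℕ, (exp (-(lam' : ℝ)) * (lam' : ℝ) ^ n / n.factorial) *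
          log ((exp (-(lam' : ℝ)) * (lam' : ℝ) ^ n / n.factorial) /
            (exp (-(lam : ℝ)) * (lam : ℝ) ^ n / n.factorial))
      = ((lam : ℝ) - lam') * poissonPMFReal lam' n + c * ((n : ℝ) * poissonPMFReal lam' n) := by
    intro n
    have hf : (n.factorial : ℝ) ≠ 0 := Nat.cast_ne_zero.2 n.factorial_ne_zero
    have hx : exp (-(lam' : ℝ)) * (lam' : ℝ) ^ n ≠ 0 :=
      mul_ne_zero (exp_ne_zero _) (pow_ne_zero _ hlam'0.ne')
    have hy : exp (-(lam : ℝ)) * (lam : ℝ) ^ n ≠ 0 :=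
      mul_ne_zero (exp_ne_zero _) (pow_ne_zero _ hlam0.ne')
    rw [Real.log_div (div_ne_zero hx hf) (div_ne_zero hy hf),
      Real.log_div hx hf, Real.log_div hy hf,
      Real.log_mul (exp_ne_zero _) (pow_ne_zero _ hlam'0.ne'),
      Real.log_mul (exp_ne_zero _) (pow_ne_zero _ hlam0.ne'),
      Real.log_exp, Real.log_exp, Real.log_pow, Real.log_pow]
    unfold poissonPMFReal
    rw [hc]
    field_simp
    ring
  rw [tsum_congr hterm]
  have h1 := (show HasSum (fun n => poissonPMFReal lam' n) 1 from poissonPMFRealSum lam').mul_left ((lam : ℝ) - lam')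
  rw [mul_one] at h1
  have h2 := (hasSum_poisson_mean lam').mul_left c
  rw [(h1.add h2).tsum_eq]
  unfold hDev
  have hq : 1 + ((lam' : ℝ) - lam) / lam = (lam' : ℝ) / lam := by field_simp; ring
  rw [hq, Real.log_div hlam'0.ne' hlam0.ne', hc]
  field_simp
  ring
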